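/- Let S be a simple Cu-semigroup with S ≠ {0}. Then the following are equivalent: (1) S is stably finite; (2) every compact element of S is finite; (3) no element of S is both compact and a greatest element of S; (4) there exists a functional λ on S taking a value other than 0 and ∞ at some element of S. -/

import Mathlib

open scoped ENNReal

/-- The (sequential) way-below relation: `a ≪ b` if for every increasing
sequence `f` with a supremum `s` such that `b ≤ s`, some `f n` dominates `a`. -/
def CuWayBelow {S : Type*} [Preorder S] (a b : S) : Prop :=
  ∀ f : ℕ → S, Monotone f → ∀ s : S, IsLUB (Set.range f) s → b ≤ s → ∃ n : ℕ, a ≤ f n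

/-- An abstract Cu-semigroup: a positively ordered monoid satisfying the
axioms (O1)-(O4). -/
structure IsCuSemigroup (S : Type*) [AddCommMonoid S] [PartialOrder S] : Prop where
  /-- addition is order-preserving -/
  add_le_add : ∀ a b c : S, a ≤ b → a + c ≤ b + c
  /-- `0` is the least element -/
  zero_le : ∀ a : S, 0 ≤ a
  /-- (O1) every increasing sequence has a supremum -/
  O1 : ∀ f : ℕ → S, Monotone f → ∃ s : S, IsLUB (Set.range f) s
  /-- (O2) every element is the supremum of a rapidly increasing sequence -/
  O2 : ∀ a : S, ∃ f : ℕ → S, (∀ n : ℕ, CuWayBelow (f n) (f (n + 1))) ∧ IsLUB (Set.range f) a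
  /-- (O3) way-below is additive -/
  O3 : ∀ a' a b' b : S, CuWayBelow a' a → CuWayBelow b' b → CuWayBelow (a' + b') (a + b)
  /-- (O4) suprema of increasing sequences are additive -/
  O4 : ∀ f g : ℕ → S, Monotone f → Monotone g → ∀ s t : S, IsLUB (Set.range f) s →
    IsLUB (Set.range g) t → IsLUB (Set.range (fun n => f n + g n)) (s + t)

/-- A functional on a Cu-semigroup: an additive, order-preserving map to
`[0,∞]` preserving `0` and suprema of increasing sequences. -/
structure IsCuFunctional {S : Type*} [AddCommMonoid S] [PartialOrder S] (l : S → ℝ≥0∞) : Prop where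
  map_zero : l 0 = 0
  map_add : ∀ a b : S, l (a + b) = l a + l b
  mono : ∀ a b : S, a ≤ b → l a ≤ l b
  map_lub : ∀ f : ℕ → S, Monotone f → ∀ s : S, IsLUB (Set.range f) s → l s = ⨆ n : ℕ, l (f n)

/-- An ideal of a Cu-semigroup: an order-hereditary submonoid closed under
suprema of increasing sequences. -/
structure IsCuIdeal {S : Type*} [AddCommMonoid S] [PartialOrder S] (I : Set S) : Prop where
  zero_mem : (0 : S) ∈ I
  add_mem : ∀ a b : S, a ∈ I → b ∈ I → a + b ∈ I
  mem_of_le : ∀ a b : S, a ≤ b → b ∈ I → a ∈ I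
  lub_mem : ∀ f : ℕ → S, Monotone f → (∀ n : ℕ, f n ∈ I) → ∀ s : S, IsLUB (Set.range f) s → s ∈ I

/-- A Cu-semigroup is simple if its only ideals are `{0}` and the whole
semigroup. -/
def CuSimple (S : Type*) [AddCommMonoid S] [PartialOrder S] : Prop :=
  ∀ I : Set S, IsCuIdeal I → I = {0} ∨ I = Set.univ

set_option linter.unusedSectionVars false
set_option linter.unusedVariables false
namespace CuBasic

variable {S : Type*} [AddCommMonoid S] [PartialOrder S]

theorem add_le_add' (hS : IsCuSemigroup S) {a b c d : S} (h1 : a ≤ b) (h2 : c ≤ d) :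
    a + c ≤ b + d := by
  calc a + c ≤ b + c := hS.add_le_add a b c h1
  _ = c + b := add_comm _ _
  _ ≤ d + b := hS.add_le_add c d b h2
  _ = b + d := add_comm _ _

theorem le_add_right (hS : IsCuSemigroup S) (a c : S) : a ≤ a + c := by
  calc a = a + 0 := (add_zero a).symm
  _ ≤ a + c := add_le_add' hS le_rfl (hS.zero_le c)

theorem nsmul_le_nsmul (hS : IsCuSemigroup S) (a : S) {n m : ℕ} (h : n ≤ m) :
    n • a ≤ m • a := by
  induction m with
  | zero => simp_all
  | succ m ih =>
    rcases Nat.lt_or_ge n (m+1) with h' | h'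
    · calc n • a ≤ m • a := ih (Nat.lt_succ_iff.mp h')
      _ ≤ m • a + a := le_add_right hS _ _
      _ = (m+1) • a := (succ_nsmul a m).symm
    · have : n = m + 1 := le_antisymm h h'
      subst this; exact le_rfl

theorem nsmul_mono (hS : IsCuSemigroup S) {a b : S} (h : a ≤ b) (n : ℕ) :
    n • a ≤ n • b := by
  induction n with
  | zero => simp
  | succ n ih =>
    calc (n+1) • a = n • a + a := succ_nsmul a n
    _ ≤ n • b + b := add_le_add' hS ih h
    _ = (n+1) • b := (succ_nsmul b n).symm

theorem wb_le_self {a b : S} (h : CuWayBelow a b) : a ≤ b := by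
  obtain ⟨n, hn⟩ := h (fun _ => b) monotone_const b
    (by rw [Set.range_const]; exact isLUB_singleton) le_rfl
  exact hn

theorem wb_zero (hS : IsCuSemigroup S) (b : S) : CuWayBelow (0 : S) b :=
  fun f _ _ _ _ => ⟨0, hS.zero_le _⟩

theorem wb_of_le_wb {a a' b : S} (h1 : a ≤ a') (h2 : CuWayBelow a' b) : CuWayBelow a b := by
  intro f hf s hs hb
  obtain ⟨n, hn⟩ := h2 f hf s hs hb
  exact ⟨n, le_trans h1 hn⟩

theorem wb_of_wb_le {a b b' : S} (h1 : CuWayBelow a b) (h2 : b ≤ b') : CuWayBelow a b' := by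
  intro f hf s hs hb
  exact h1 f hf s hs (le_trans h2 hb)

theorem wb_nsmul (hS : IsCuSemigroup S) {a b : S} (h : CuWayBelow a b) (n : ℕ) :
    CuWayBelow (n • a) (n • b) := by
  induction n with
  | zero => simpa using wb_zero hS 0
  | succ n ih =>
    have := hS.O3 _ _ _ _ ih h
    simpa [succ_nsmul] using this

theorem O2chain_mono {f : ℕ → S} (hf : ∀ n, CuWayBelow (f n) (f (n+1))) : Monotone f :=
  monotone_nat_of_le_succ fun n => wb_le_self (hf n)

/-- step lemma: an element way below the sup of a monotone sequence is way below
some member of the sequence. -/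
theorem wb_of_lub (hS : IsCuSemigroup S) {z s : S} (hz : CuWayBelow z s)
    {g : ℕ → S} (hg : Monotone g) (hs : IsLUB (Set.range g) s) :
    ∃ n, CuWayBelow z (g n) := by
  obtain ⟨h, hchain, hlub⟩ := hS.O2 s
  have hmono := O2chain_mono hchain
  obtain ⟨k, hk⟩ := hz h hmono s hlub le_rfl
  -- h (k+1) ≤ g n for some n
  obtain ⟨n, hn⟩ := hchain (k+1) g hg s hs (hlub.1 (Set.mem_range_self (k+2)))
  exact ⟨n, wb_of_wb_le (wb_of_le_wb hk (hchain k)) hn⟩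

/-- decomposition: z way below x + y gives x' ≪ x, y' ≪ y with z ≤ x' + y'. -/
theorem wb_add_decomp (hS : IsCuSemigroup S) {z x y : S} (hz : CuWayBelow z (x + y)) :
    ∃ x' y', CuWayBelow x' x ∧ CuWayBelow y' y ∧ z ≤ x' + y' := by
  obtain ⟨f, hfc, hfl⟩ := hS.O2 x
  obtain ⟨g, hgc, hgl⟩ := hS.O2 y
  have hfm := O2chain_mono hfc
  have hgm := O2chain_mono hgc
  have hsum : IsLUB (Set.range fun n => f n + g n) (x + y) := hS.O4 f g hfm hgm x y hfl hgl
  have hsmono : Monotone fun n => f n + g n := fun n m h => add_le_add' hS (hfm h) (hgm h)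
  obtain ⟨n, hn⟩ := hz _ hsmono _ hsum le_rfl
  exact ⟨f n, g n, wb_of_wb_le (hfc n) (hfl.1 (Set.mem_range_self (n+1))),
    wb_of_wb_le (hgc n) (hgl.1 (Set.mem_range_self (n+1))), hn⟩

/-- In a simple nonzero Cu-semigroup, the sup of multiples of a nonzero element is a
greatest element. -/
theorem exists_greatest_lub (hS : IsCuSemigroup S) (hsimple : CuSimple S)
    {u : S} (hu : u ≠ 0) :
    ∃ s : S, IsLUB (Set.range fun n : ℕ => n • u) s ∧ ∀ b : S, b ≤ s := by
  have hmono : Monotone fun n : ℕ => n • u := fun n m h => nsmul_le_nsmul hS u h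
  obtain ⟨s, hs⟩ := hS.O1 _ hmono
  refine ⟨s, hs, ?_⟩
  have hss : s + s = s := by
    have h2 : IsLUB (Set.range fun n : ℕ => n • u + n • u) (s + s) :=
      hS.O4 _ _ hmono hmono s s hs hs
    have h2' : IsLUB (Set.range fun n : ℕ => n • u + n • u) s := by
      constructor
      · rintro x ⟨n, rfl⟩
        show (n • u : S) + n • u ≤ s
        have h2n : (n • u : S) + n • u = (2*n) • u := by
          rw [mul_comm, mul_nsmul, two_nsmul]
        rw [h2n]; exact hs.1 (Set.mem_range_self _)
      · intro b hb
        apply hs.2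
        rintro x ⟨n, rfl⟩
        calc n • u ≤ n • u + n • u := le_add_right hS _ _
        _ ≤ b := hb ⟨n, rfl⟩
    exact h2.unique h2'
  have hideal : IsCuIdeal {w : S | w ≤ s} := by
    constructor
    · exact hS.zero_le s
    · intro a b ha hb
      calc a + b ≤ s + s := add_le_add' hS ha hb
      _ = s := hss
    · intro a b hab hb; exact le_trans hab hb
    · intro f hf hmem t ht
      exact ht.2 (by rintro x ⟨n, rfl⟩; exact hmem n)
  rcases hsimple _ hideal with h | h
  · exfalso
    have : u ∈ {w : S | w ≤ s} := by
      have : (1:ℕ) • u ≤ s := hs.1 (Set.mem_range_self 1)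
      simpa using this
    rw [h] at this
    exact hu this
  · intro b
    have : b ∈ {w : S | w ≤ s} := h ▸ Set.mem_univ b
    exact this

end CuBasic
namespace CuBasic
variable {S : Type*} [AddCommMonoid S] [PartialOrder S]

/-- (3) implies (1): no compact greatest element implies stably finite. -/
theorem three_to_one (hS : IsCuSemigroup S) (hsimple : CuSimple S)
    (h3 : ¬ ∃ a : S, CuWayBelow a a ∧ ∀ b : S, b ≤ a) :
    ∀ a b : S, CuWayBelow a b → ∀ c : S, a + c = a → c = 0 := by
  intro a b hab c hc
  by_contra hcne
  obtain ⟨s, hslub, hsgreat⟩ := exists_greatest_lub hS hsimple hcne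
  -- n • c ≤ a for every n
  have hna : ∀ n : ℕ, a + n • c = a := by
    intro n
    induction n with
    | zero => simp
    | succ n ih =>
      calc a + (n+1) • c = (a + c) + n • c := by rw [succ_nsmul]; rw [add_comm (n • c) c, ← add_assoc]
      _ = a + n • c := by rw [hc]
      _ = a := ih
  have hub : a ∈ upperBounds (Set.range fun n : ℕ => n • c) := by
    rintro x ⟨n, rfl⟩
    calc (n : ℕ) • c ≤ a + n • c := by rw [add_comm]; exact le_add_right hS _ _
    _ = a := hna n
  have hsa : s ≤ a := hslub.2 hub
  have hga : ∀ w : S, w ≤ a := fun w => le_trans (hsgreat w) hsa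
  refine h3 ⟨a, ?_, hga⟩
  intro f hf t ht hat
  exact hab f hf t ht (le_trans (hga b) hat)

theorem nsmul_add_le (hS : IsCuSemigroup S) {X Y z : S} (h : X + z ≤ Y + z) :
    ∀ m : ℕ, m • X + z ≤ m • Y + z := by
  intro m
  induction m with
  | zero => simp
  | succ m ih =>
    calc (m+1) • X + z = m • X + (X + z) := by rw [succ_nsmul]; abel
    _ ≤ m • X + (Y + z) := add_le_add' hS le_rfl h
    _ = (m • X + z) + Y := by abel
    _ ≤ (m • Y + z) + Y := hS.add_le_add _ _ _ ih
    _ = (m+1) • Y + z := by rw [succ_nsmul]; abel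
    
/-- The key arithmetic lemma: under stable finiteness, with `u ≠ 0` way below `d`,
`a • u + z ≤ b • u + z` is impossible for `b < a` and `z` dominated by a multiple of `u`. -/
theorem keyL (hS : IsCuSemigroup S)
    (h1 : ∀ a b : S, CuWayBelow a b → ∀ c : S, a + c = a → c = 0)
    {u d : S} (hu : u ≠ 0) (hud : CuWayBelow u d)
    {a b : ℕ} (hab : b < a) {z : S} (hz : ∃ n : ℕ, z ≤ n • u) :
    ¬ (a • u + z ≤ b • u + z) := by
  intro h
  obtain ⟨n, hn⟩ := hz
  have hit := nsmul_add_le hS h (n + 1)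
  set p := (n+1) * a with hp
  set q := (n+1) * b + n with hq
  have hpq : q < p := by
    have : (n+1) * (b+1) ≤ (n+1) * a := Nat.mul_le_mul_left _ hab
    have h2 : (n+1) * (b+1) = (n+1)*b + (n+1) := by ring
    omega
  have hpu : p • u ≤ q • u := by
    calc p • u = (n+1) • (a • u) := by rw [hp, mul_comm, mul_nsmul]
    _ ≤ (n+1) • (a • u) + z := le_add_right hS _ _
    _ ≤ (n+1) • (b • u) + z := hit
    _ ≤ (n+1) • (b • u) + n • u := add_le_add' hS le_rfl hn
    _ = ((n+1) * b) • u + n • u := by rw [mul_comm, mul_nsmul]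
    _ = q • u := by rw [hq, add_nsmul]
  have hqu : q • u ≤ p • u := nsmul_le_nsmul hS u (le_of_lt hpq)
  have heq : p • u = q • u := le_antisymm hpu hqu
  have hdecomp : q • u + (p - q) • u = q • u := by
    rw [← add_nsmul]
    rw [Nat.add_sub_cancel' (le_of_lt hpq)]
    exact heq
  have hz0 : (p - q) • u = 0 := h1 (q • u) (q • d) (wb_nsmul hS hud q) _ hdecomp
  have : u ≤ (p - q) • u := by
    calc u = (1:ℕ) • u := (one_nsmul u).symm
    _ ≤ (p - q) • u := nsmul_le_nsmul hS u (by omega)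
  rw [hz0] at this
  exact hu (le_antisymm this (hS.zero_le u))

end CuBasic
namespace CuBasic
variable {S : Type*} [AddCommMonoid S] [PartialOrder S]

/-- The submonoid of elements dominated by a multiple of `u`. -/
def Uc (hS : IsCuSemigroup S) (u : S) : AddSubmonoid S where
  carrier := {x | ∃ n : ℕ, x ≤ n • u}
  zero_mem' := ⟨0, by simp⟩
  add_mem' := by
    rintro x y ⟨n, hx⟩ ⟨m, hy⟩
    exact ⟨n + m, by rw [add_nsmul]; exact add_le_add' hS hx hy⟩

variable (hS : IsCuSemigroup S) (u : S)

/-- total weight of a formal sum of elements of `Uc`. -/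
def weight (P : ↥(Uc hS u) →₀ ℕ) : ↥(Uc hS u) := P.sum fun x n => n • x

theorem weight_zero : weight hS u 0 = 0 := Finsupp.sum_zero_index

theorem weight_add (P Q : ↥(Uc hS u) →₀ ℕ) :
    weight hS u (P + Q) = weight hS u P + weight hS u Q := by
  classical
  exact Finsupp.sum_add_index (fun x _ => zero_nsmul x) (fun x _ n m => add_nsmul x n m)

theorem weight_single (x : ↥(Uc hS u)) (n : ℕ) :
    weight hS u (Finsupp.single x n) = n • x :=
  Finsupp.sum_single_index (zero_nsmul x)

theorem weight_nsmul (m : ℕ) (P : ↥(Uc hS u) →₀ ℕ) :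
    weight hS u (m • P) = m • weight hS u P := by
  induction m with
  | zero => simp [weight_zero]
  | succ m ih => rw [succ_nsmul, weight_add, ih, ← succ_nsmul]

theorem weight_le_weight {P Q : ↥(Uc hS u) →₀ ℕ} (h : ∀ x, P x ≤ Q x) :
    (weight hS u P : S) ≤ (weight hS u Q : S) := by
  classical
  set R : ↥(Uc hS u) →₀ ℕ := Finsupp.zipWith (fun a b => a - b) (by simp) Q P with hR
  have hQ : Q = P + R := by
    ext x
    have := h x
    simp only [hR, Finsupp.add_apply, Finsupp.zipWith_apply]
    omega
  rw [hQ, weight_add]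
  push_cast
  exact le_add_right hS _ _

/-- Set of certificate values for a formal real combination. -/
def Cset (v : ↥(Uc hS u) →₀ ℝ) : Set ℝ :=
  { r | ∃ k s s' : ℕ, ∃ P Q : ↥(Uc hS u) →₀ ℕ, ∃ z : ↥(Uc hS u), 0 < k ∧
      (∀ x, (k : ℝ) * v x ≤ (P x : ℝ) - (Q x : ℝ)) ∧
      ((weight hS u P : S) + (z : S) + s • u ≤ (weight hS u Q : S) + (z : S) + s' • u) ∧
      r = ((s' : ℝ) - (s : ℝ)) / k }

theorem cset_nonempty (v : ↥(Uc hS u) →₀ ℝ) : (Cset hS u v).Nonempty := by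
  classical
  set P : ↥(Uc hS u) →₀ ℕ := Finsupp.onFinset v.support (fun x => ⌈v x⌉₊)
    (fun x hx => Finsupp.mem_support_iff.mpr (fun h0 => hx (by simp [h0]))) with hP
  obtain ⟨n, hn⟩ := (weight hS u P).2
  refine ⟨(n : ℝ), 1, 0, n, P, 0, 0, one_pos, ?_, ?_, by norm_num⟩
  · intro x
    simp only [hP, Finsupp.onFinset_apply, Finsupp.coe_zero, Pi.zero_apply, Nat.cast_zero,
      sub_zero, Nat.cast_one, one_mul]
    exact Nat.le_ceil (v x)
  · rw [weight_zero]
    simp only [ZeroMemClass.coe_zero, zero_nsmul, add_zero, zero_add]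
    exact hn

theorem cset_add {v v' : ↥(Uc hS u) →₀ ℝ} {r r' : ℝ}
    (h : r ∈ Cset hS u v) (h' : r' ∈ Cset hS u v') : r + r' ∈ Cset hS u (v + v') := by
  obtain ⟨k, s1, s1', P1, Q1, z1, hk, hpt, hln, hr⟩ := h
  obtain ⟨k', s2, s2', P2, Q2, z2, hk', hpt', hln', hr'⟩ := h'
  refine ⟨k * k', k' * s1 + k * s2, k' * s1' + k * s2',
    k' • P1 + k • P2, k' • Q1 + k • Q2, z1 + z2, Nat.mul_pos hk hk', ?_, ?_, ?_⟩
  · intro x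
    have e1 : (k : ℝ) * v x ≤ (P1 x : ℝ) - Q1 x := hpt x
    have e2 : (k' : ℝ) * v' x ≤ (P2 x : ℝ) - Q2 x := hpt' x
    have b1 : (k' : ℝ) * ((k : ℝ) * v x) ≤ (k' : ℝ) * ((P1 x : ℝ) - Q1 x) :=
      mul_le_mul_of_nonneg_left e1 (by positivity)
    have b2 : (k : ℝ) * ((k' : ℝ) * v' x) ≤ (k : ℝ) * ((P2 x : ℝ) - Q2 x) :=
      mul_le_mul_of_nonneg_left e2 (by positivity)
    simp only [Finsupp.add_apply, Finsupp.smul_apply, smul_eq_mul]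
    push_cast
    nlinarith [b1, b2]
  · -- scale and add the two monoid inequalities
    have key : ∀ (m : ℕ) (A B z : S) (s s' : ℕ), A + z + s • u ≤ B + z + s' • u →
        m • A + z + (m * s) • u ≤ m • B + z + (m * s') • u := by
      intro m A B z s s' hle
      have h0 : (A + s • u) + z ≤ (B + s' • u) + z := by
        calc (A + s • u) + z = A + z + s • u := by abel
        _ ≤ B + z + s' • u := hle
        _ = (B + s' • u) + z := by abel
      have := nsmul_add_le hS h0 m
      calc m • A + z + (m * s) • u = m • (A + s • u) + z := by
            rw [nsmul_add, smul_smul]; abel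
      _ ≤ m • (B + s' • u) + z := this
      _ = m • B + z + (m * s') • u := by rw [nsmul_add, smul_smul]; abel
    have i1 := key k' _ _ _ _ _ hln
    have i2 := key k _ _ _ _ _ hln'
    have isum := add_le_add' hS i1 i2
    have ew : ∀ (R1 : ↥(Uc hS u) →₀ ℕ) (R2 : ↥(Uc hS u) →₀ ℕ),
        (weight hS u (k' • R1 + k • R2) : S) = k' • (weight hS u R1 : S) + k • (weight hS u R2 : S) := by
      intro R1 R2
      rw [weight_add, weight_nsmul, weight_nsmul]
      rfl
    calc (weight hS u (k' • P1 + k • P2) : S) + ((z1 + z2 : ↥(Uc hS u)) : S)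
          + (k' * s1 + k * s2) • u
        = (k' • (weight hS u P1 : S) + (z1 : S) + (k' * s1) • u)
          + (k • (weight hS u P2 : S) + (z2 : S) + (k * s2) • u) := by
          rw [ew, add_nsmul]; push_cast; abel
    _ ≤ (k' • (weight hS u Q1 : S) + (z1 : S) + (k' * s1') • u)
          + (k • (weight hS u Q2 : S) + (z2 : S) + (k * s2') • u) := add_le_add' hS i1 i2
    _ = (weight hS u (k' • Q1 + k • Q2) : S) + ((z1 + z2 : ↥(Uc hS u)) : S)
          + (k' * s1' + k * s2') • u := by rw [ew, add_nsmul]; push_cast; abel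
  · rw [hr, hr']
    have hkR : (k : ℝ) ≠ 0 := Nat.cast_ne_zero.mpr hk.ne'
    have hkR' : (k' : ℝ) ≠ 0 := Nat.cast_ne_zero.mpr hk'.ne'
    field_simp
    push_cast; ring

theorem cset_zero_nonneg
    (hKL : ∀ a b : ℕ, b < a → ∀ z : S, (∃ n : ℕ, z ≤ n • u) → ¬(a • u + z ≤ b • u + z))
    {r : ℝ} (h : r ∈ Cset hS u 0) : 0 ≤ r := by
  classical
  obtain ⟨k, s, s', P, Q, z, hk, hpt, hln, hr⟩ := h
  -- pointwise: Q x ≤ P x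
  have hPQ : ∀ x, Q x ≤ P x := by
    intro x
    have := hpt x
    simp only [Finsupp.coe_zero, Pi.zero_apply, mul_zero] at this
    have : (Q x : ℝ) ≤ (P x : ℝ) := by linarith
    exact_mod_cast this
  have hw : (weight hS u Q : S) ≤ (weight hS u P : S) := weight_le_weight hS u hPQ
  -- s ≤ s'
  have hss : s ≤ s' := by
    by_contra hcon
    push_neg at hcon
    -- build contradiction with hKL
    set R : ↥(Uc hS u) →₀ ℕ := Finsupp.zipWith (fun a b => a - b) (by simp) P Q with hRdef
    have hPeq : P = Q + R := by
      ext x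
      have := hPQ x
      simp only [hRdef, Finsupp.add_apply, Finsupp.zipWith_apply]
      omega
    have hWP : (weight hS u P : S) = (weight hS u Q : S) + (weight hS u R : S) := by
      rw [hPeq, weight_add]; rfl
    set Z : ↥(Uc hS u) := weight hS u Q + weight hS u R + z with hZ
    have hfinal : s • u + (Z : S) ≤ s' • u + (Z : S) := by
      calc s • u + (Z : S) = (weight hS u P : S) + (z : S) + s • u := by
            rw [hZ, hWP]; push_cast; abel
      _ ≤ (weight hS u Q : S) + (z : S) + s' • u := hln
      _ ≤ (weight hS u Q : S) + (weight hS u R : S) + (z : S) + s' • u := by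
            apply add_le_add' hS _ le_rfl
            apply add_le_add' hS _ le_rfl
            exact le_add_right hS _ _
      _ = s' • u + (Z : S) := by rw [hZ]; push_cast; abel
    exact hKL s s' hcon (Z : S) Z.2 hfinal
  rw [hr]
  apply div_nonneg _ (Nat.cast_nonneg k)
  have : (s : ℝ) ≤ (s' : ℝ) := Nat.cast_le.mpr hss
  linarith

end CuBasic
namespace CuBasic
variable {S : Type*} [AddCommMonoid S] [PartialOrder S] (hS : IsCuSemigroup S) (u : S)

/-- The sublinear comparison function. -/
noncomputable def Nf (v : ↥(Uc hS u) →₀ ℝ) : ℝ := sInf (Cset hS u v)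

section Nf
variable (hKL : ∀ a b : ℕ, b < a → ∀ z : S, (∃ n : ℕ, z ≤ n • u) → ¬(a • u + z ≤ b • u + z))

include hKL

theorem cset_nonneg_of_pair {v : ↥(Uc hS u) →₀ ℝ} {r r' : ℝ}
    (h : r ∈ Cset hS u v) (h' : r' ∈ Cset hS u (-v)) : 0 ≤ r + r' := by
  have := cset_add hS u h h'
  rw [add_neg_cancel] at this
  exact cset_zero_nonneg hS u hKL this

theorem cset_bddBelow (v : ↥(Uc hS u) →₀ ℝ) : BddBelow (Cset hS u v) := by
  obtain ⟨r', hr'⟩ := cset_nonempty hS u (-v)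
  exact ⟨-r', fun r hr => by have := cset_nonneg_of_pair hS u hKL hr hr'; linarith⟩

theorem Nf_le {v : ↥(Uc hS u) →₀ ℝ} {r : ℝ} (h : r ∈ Cset hS u v) : Nf hS u v ≤ r :=
  csInf_le (cset_bddBelow hS u hKL v) h

theorem le_Nf {v : ↥(Uc hS u) →₀ ℝ} {b : ℝ} (h : ∀ r ∈ Cset hS u v, b ≤ r) : b ≤ Nf hS u v :=
  le_csInf (cset_nonempty hS u v) h

theorem Nf_add (v v' : ↥(Uc hS u) →₀ ℝ) : Nf hS u (v + v') ≤ Nf hS u v + Nf hS u v' := by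
  apply le_of_forall_pos_le_add
  intro ε hε
  obtain ⟨r, hr, hrlt⟩ := Real.lt_sInf_add_pos (cset_nonempty hS u v) (half_pos hε)
  obtain ⟨r', hr', hrlt'⟩ := Real.lt_sInf_add_pos (cset_nonempty hS u v') (half_pos hε)
  have := Nf_le hS u hKL (cset_add hS u hr hr')
  have e : Nf hS u v = sInf (Cset hS u v) := rfl
  have e' : Nf hS u v' = sInf (Cset hS u v') := rfl
  rw [e, e']
  linarith

theorem Nf_mono_pointwise {v w : ↥(Uc hS u) →₀ ℝ} (h : ∀ x, v x ≤ w x) :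
    Nf hS u v ≤ Nf hS u w := by
  apply le_csInf (cset_nonempty hS u w)
  intro r hr
  apply Nf_le hS u hKL
  obtain ⟨k, s, s', P, Q, z, hk, hpt, hln, hrr⟩ := hr
  refine ⟨k, s, s', P, Q, z, hk, fun x => le_trans ?_ (hpt x), hln, hrr⟩
  exact mul_le_mul_of_nonneg_left (h x) (Nat.cast_nonneg k)

theorem Nf_zero : Nf hS u 0 = 0 := by
  apply le_antisymm
  · apply Nf_le hS u hKL
    exact ⟨1, 0, 0, 0, 0, 0, one_pos, by simp, le_rfl, by norm_num⟩
  · exact le_Nf hS u hKL fun r hr => cset_zero_nonneg hS u hKL hr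

theorem cset_nat_div_smul {v : ↥(Uc hS u) →₀ ℝ} {r : ℝ} (h : r ∈ Cset hS u v)
    {a b : ℕ} (ha : 0 < a) (hb : 0 < b) :
    ((a : ℝ) / b) * r ∈ Cset hS u (((a : ℝ) / b) • v) := by
  obtain ⟨k, s, s', P, Q, z, hk, hpt, hln, hrr⟩ := h
  refine ⟨k * b, a * s, a * s', a • P, a • Q, z, by positivity, ?_, ?_, ?_⟩
  · intro x
    have hmul := mul_le_mul_of_nonneg_left (hpt x) (Nat.cast_nonneg a : (0:ℝ) ≤ a)
    simp only [Finsupp.smul_apply, smul_eq_mul]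
    have hbne : (b : ℝ) ≠ 0 := Nat.cast_ne_zero.mpr hb.ne'
    push_cast
    rw [show (k:ℝ) * (b:ℝ) * ((a:ℝ) / (b:ℝ) * v x) = (a:ℝ) * ((k:ℝ) * v x) by
      field_simp]
    nlinarith [hmul]
  · have key : ∀ (A B z : S) (s s' : ℕ), A + z + s • u ≤ B + z + s' • u →
        a • A + z + (a * s) • u ≤ a • B + z + (a * s') • u := by
      intro A B z s s' hle
      have h0 : (A + s • u) + z ≤ (B + s' • u) + z := by
        calc (A + s • u) + z = A + z + s • u := by abel
        _ ≤ B + z + s' • u := hle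
        _ = (B + s' • u) + z := by abel
      have := nsmul_add_le hS h0 a
      calc a • A + z + (a * s) • u = a • (A + s • u) + z := by rw [nsmul_add, smul_smul]; abel
      _ ≤ a • (B + s' • u) + z := this
      _ = a • B + z + (a * s') • u := by rw [nsmul_add, smul_smul]; abel
    have := key _ _ _ _ _ hln
    calc (weight hS u (a • P) : S) + (z : S) + (a * s) • u
        = a • (weight hS u P : S) + (z : S) + (a * s) • u := by rw [weight_nsmul]; rfl
    _ ≤ a • (weight hS u Q : S) + (z : S) + (a * s') • u := this
    _ = (weight hS u (a • Q) : S) + (z : S) + (a * s') • u := by rw [weight_nsmul]; rfl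
  · rw [hrr]
    have hkR : (k : ℝ) ≠ 0 := Nat.cast_ne_zero.mpr hk.ne'
    have hbR : (b : ℝ) ≠ 0 := Nat.cast_ne_zero.mpr hb.ne'
    push_cast
    field_simp

theorem Nf_nat_div_smul_le (v : ↥(Uc hS u) →₀ ℝ) {a b : ℕ} (ha : 0 < a) (hb : 0 < b) :
    Nf hS u (((a : ℝ) / b) • v) ≤ ((a : ℝ) / b) * Nf hS u v := by
  have hq : (0:ℝ) < (a : ℝ) / b := by positivity
  rw [show ((a:ℝ)/b) * Nf hS u v = ((a:ℝ)/b) * sInf (Cset hS u v) from rfl]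
  have : ∀ r ∈ Cset hS u v, Nf hS u (((a : ℝ) / b) • v) / ((a:ℝ)/b) ≤ r := by
    intro r hr
    rw [div_le_iff₀ hq]
    calc Nf hS u (((a : ℝ) / b) • v) ≤ ((a : ℝ) / b) * r :=
      Nf_le hS u hKL (cset_nat_div_smul hS u hKL hr ha hb)
    _ = r * ((a:ℝ)/b) := mul_comm _ _
  have h2 := le_Nf hS u hKL this
  rw [div_le_iff₀ hq] at h2
  calc Nf hS u (((a : ℝ) / b) • v) ≤ sInf (Cset hS u v) * ((a:ℝ)/b) := h2
  _ = ((a:ℝ)/b) * sInf (Cset hS u v) := mul_comm _ _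

theorem Nf_rat_smul_le (v : ↥(Uc hS u) →₀ ℝ) {q : ℚ} (hq : 0 < q) :
    Nf hS u ((q : ℝ) • v) ≤ (q : ℝ) * Nf hS u v := by
  have ha : 0 < q.num.toNat := by
    have := Rat.num_pos.mpr hq
    omega
  have hb : 0 < q.den := q.den_pos
  have hcast : (q : ℝ) = (q.num.toNat : ℝ) / (q.den : ℝ) := by
    rw [Rat.cast_def]
    congr 1
    exact_mod_cast (Int.toNat_of_nonneg (Rat.num_pos.mpr hq).le).symm
  rw [hcast]
  exact Nf_nat_div_smul_le hS u hKL v ha hb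

/-- positive part of a formal combination -/
noncomputable def vpos (v : ↥(Uc hS u) →₀ ℝ) : ↥(Uc hS u) →₀ ℝ :=
  Finsupp.mapRange (fun t => max t 0) (by simp) v

theorem Nf_real_smul_le (v : ↥(Uc hS u) →₀ ℝ) {c : ℝ} (hc : 0 < c) :
    Nf hS u (c • v) ≤ c * Nf hS u v := by
  apply le_of_forall_pos_le_add
  intro ε hε
  set M := |Nf hS u v| + 2 * |Nf hS u (vpos hS u v)| + 1 with hM
  have hM0 : 0 < M := by positivity
  set δ := min (ε / M) (c / 2) with hδ
  have hδ0 : 0 < δ := by positivity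
  -- rationals q' ∈ (c - δ, c), q ∈ (c, c + δ)
  obtain ⟨q', hq'1, hq'2⟩ := exists_rat_btwn (show c - min δ (c/2) < c by
    have : 0 < min δ (c/2) := by positivity
    linarith)
  obtain ⟨q, hq1, hq2⟩ := exists_rat_btwn (show c < c + δ by linarith)
  have hq'pos : 0 < q' := by
    have h1 : c - min δ (c/2) ≥ c - c/2 := by
      have := min_le_right δ (c/2); linarith
    have : (0:ℝ) < (q' : ℝ) := by linarith
    exact_mod_cast this
  have hqq' : (q' : ℝ) < (q : ℝ) := by linarith
  have hqq'pos : 0 < q - q' := by exact_mod_cast sub_pos.mpr (by exact_mod_cast hqq')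
  -- pointwise bound : c • v ≤ q' • v + (q - q') • vpos v
  have hpt : ∀ x, (c • v) x ≤ ((q' : ℝ) • v + ((q : ℝ) - q') • vpos hS u v) x := by
    intro x
    simp only [Finsupp.add_apply, Finsupp.smul_apply, smul_eq_mul, vpos,
      Finsupp.mapRange_apply]
    rcases le_or_gt 0 (v x) with hvx | hvx
    · rw [max_eq_left hvx]
      nlinarith [hq2.le, hq'2.le]
    · rw [max_eq_right hvx.le]
      nlinarith [hq'2.le, hq'1.le]
  calc Nf hS u (c • v) ≤ Nf hS u ((q' : ℝ) • v + ((q : ℝ) - q') • vpos hS u v) :=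
        Nf_mono_pointwise hS u hKL hpt
  _ ≤ Nf hS u ((q' : ℝ) • v) + Nf hS u (((q : ℝ) - q') • vpos hS u v) := Nf_add hS u hKL _ _
  _ ≤ (q' : ℝ) * Nf hS u v + ((q : ℝ) - (q' : ℝ)) * Nf hS u (vpos hS u v) := by
      have h1 := Nf_rat_smul_le hS u hKL v hq'pos
      have h2 := Nf_rat_smul_le hS u hKL (vpos hS u v) (q := q - q') (by exact_mod_cast hqq'pos)
      push_cast at h2 ⊢
      exact add_le_add h1 h2
  _ ≤ c * Nf hS u v + ε := by
      have b1 : (q' : ℝ) * Nf hS u v - c * Nf hS u v ≤ δ * |Nf hS u v| := by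
        have : |(q' : ℝ) - c| ≤ δ := by
          rw [abs_le]
          constructor
          · have := min_le_left δ (c/2); linarith
          · linarith
        calc (q' : ℝ) * Nf hS u v - c * Nf hS u v = ((q':ℝ) - c) * Nf hS u v := by ring
        _ ≤ |((q':ℝ) - c) * Nf hS u v| := le_abs_self _
        _ = |(q':ℝ) - c| * |Nf hS u v| := abs_mul _ _
        _ ≤ δ * |Nf hS u v| := mul_le_mul_of_nonneg_right this (abs_nonneg _)
      have b2 : ((q : ℝ) - (q' : ℝ)) * Nf hS u (vpos hS u v) ≤ 2 * δ * |Nf hS u (vpos hS u v)| := by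
        have hd : (q : ℝ) - q' ≤ 2 * δ := by
          have := min_le_left δ (c/2); linarith
        calc ((q : ℝ) - q') * Nf hS u (vpos hS u v) ≤ |((q : ℝ) - q') * Nf hS u (vpos hS u v)| :=
              le_abs_self _
        _ = |(q : ℝ) - q'| * |Nf hS u (vpos hS u v)| := abs_mul _ _
        _ = ((q : ℝ) - q') * |Nf hS u (vpos hS u v)| := by rw [abs_of_pos (show (0:ℝ) < (q:ℝ) - (q':ℝ) by linarith)]
        _ ≤ 2 * δ * |Nf hS u (vpos hS u v)| := mul_le_mul_of_nonneg_right hd (abs_nonneg _)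
      have hδM : δ * M ≤ ε := by
        rw [hδ]
        calc min (ε / M) (c / 2) * M ≤ (ε / M) * M := mul_le_mul_of_nonneg_right (min_le_left _ _) hM0.le
        _ = ε := by field_simp
      have expand : δ * |Nf hS u v| + 2 * δ * |Nf hS u (vpos hS u v)| ≤ δ * M := by
        rw [hM]; nlinarith [hδ0.le, abs_nonneg (Nf hS u v), abs_nonneg (Nf hS u (vpos hS u v))]
      linarith

theorem Nf_smul {c : ℝ} (hc : 0 < c) (v : ↥(Uc hS u) →₀ ℝ) :
    Nf hS u (c • v) = c * Nf hS u v := by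
  apply le_antisymm (Nf_real_smul_le hS u hKL v hc)
  have h2 := Nf_real_smul_le hS u hKL (c • v) (inv_pos.mpr hc)
  rw [smul_smul, inv_mul_cancel₀ hc.ne', one_smul] at h2
  calc c * Nf hS u v ≤ c * (c⁻¹ * Nf hS u (c • v)) := mul_le_mul_of_nonneg_left h2 hc.le
  _ = Nf hS u (c • v) := by field_simp

end Nf
end CuBasic
namespace CuBasic
variable {S : Type*} [AddCommMonoid S] [PartialOrder S] (hS : IsCuSemigroup S) (u : S)

/-- `u` as an element of `Uc`. -/
def uU : ↥(Uc hS u) := ⟨u, 1, le_of_eq (one_nsmul u).symm⟩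

/-- formal nat combination as real combination -/
noncomputable def toR (P : ↥(Uc hS u) →₀ ℕ) : ↥(Uc hS u) →₀ ℝ :=
  Finsupp.mapRange Nat.cast Nat.cast_zero P

theorem toR_single (m : ↥(Uc hS u)) (n : ℕ) :
    toR hS u (Finsupp.single m n) = Finsupp.single m (n : ℝ) :=
  Finsupp.mapRange_single

theorem toR_add (P Q : ↥(Uc hS u) →₀ ℕ) :
    toR hS u (P + Q) = toR hS u P + toR hS u Q :=
  Finsupp.mapRange_add (by norm_num) P Q

theorem one_mem_cset : (1 : ℝ) ∈ Cset hS u (Finsupp.single (uU hS u) (1:ℝ)) := by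
  classical
  refine ⟨1, 0, 1, Finsupp.single (uU hS u) 1, 0, 0, one_pos, ?_, ?_, by norm_num⟩
  · intro x
    rcases eq_or_ne (uU hS u) x with h | h
    · subst h; simp
    · simp [Finsupp.single_apply, h]
  · rw [weight_single, weight_zero]
    simp only [ZeroMemClass.coe_zero, zero_nsmul, add_zero, zero_add, one_nsmul]
    exact le_rfl

theorem neg_one_mem_cset : (-1 : ℝ) ∈ Cset hS u (-Finsupp.single (uU hS u) (1:ℝ)) := by
  classical
  refine ⟨1, 1, 0, 0, Finsupp.single (uU hS u) 1, 0, one_pos, ?_, ?_, by norm_num⟩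
  · intro x
    rcases eq_or_ne (uU hS u) x with h | h
    · subst h; simp
    · simp [Finsupp.single_apply, h]
  · rw [weight_single, weight_zero]
    simp only [ZeroMemClass.coe_zero, zero_nsmul, add_zero, zero_add, one_nsmul]
    exact le_rfl


section Nvals
variable (hKL : ∀ a b : ℕ, b < a → ∀ z : S, (∃ n : ℕ, z ≤ n • u) → ¬(a • u + z ≤ b • u + z))
include hKL

theorem Nf_formal_le {P Q : ↥(Uc hS u) →₀ ℕ} (h : (weight hS u P : S) ≤ (weight hS u Q : S)) :
    Nf hS u (toR hS u P - toR hS u Q) ≤ 0 := by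
  apply Nf_le hS u hKL
  refine ⟨1, 0, 0, P, Q, 0, one_pos, ?_, ?_, by norm_num⟩
  · intro x
    simp [toR, Finsupp.sub_apply, Finsupp.mapRange_apply]
  · simpa using h

theorem Nf_deltaU : Nf hS u (Finsupp.single (uU hS u) (1:ℝ)) = 1 := by
  apply le_antisymm (Nf_le hS u hKL (one_mem_cset hS u))
  apply le_Nf hS u hKL
  intro r hr
  have := cset_nonneg_of_pair hS u hKL hr (neg_one_mem_cset hS u)
  linarith

theorem Nf_neg_deltaU : Nf hS u (-Finsupp.single (uU hS u) (1:ℝ)) = -1 := by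
  apply le_antisymm (Nf_le hS u hKL (neg_one_mem_cset hS u))
  apply le_Nf hS u hKL
  intro r hr
  have := cset_nonneg_of_pair hS u hKL (one_mem_cset hS u) (by simpa using hr)
  linarith

/-- Existence of a bounded monotone additive normalized real function on `Uc`. -/
theorem exists_phi : ∃ φ : ↥(Uc hS u) → ℝ,
    (∀ m m' : ↥(Uc hS u), (m : S) ≤ (m' : S) → φ m ≤ φ m') ∧
    (∀ m m' : ↥(Uc hS u), φ (m + m') = φ m + φ m') ∧
    (∀ m : ↥(Uc hS u), 0 ≤ φ m) ∧ φ (uU hS u) = 1 := by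
  classical
  set δu : ↥(Uc hS u) →₀ ℝ := Finsupp.single (uU hS u) (1:ℝ) with hδu
  have hne : δu ≠ 0 := by
    rw [hδu]
    intro h
    exact one_ne_zero (Finsupp.single_eq_zero.mp h)
  set f : (↥(Uc hS u) →₀ ℝ) →ₗ.[ℝ] ℝ := LinearPMap.mkSpanSingleton δu (1:ℝ) hne with hf
  have hfle : ∀ x : f.domain, f x ≤ Nf hS u x := by
    rintro ⟨x, hx⟩
    obtain ⟨t, ht⟩ := Submodule.mem_span_singleton.mp hx
    have hx' : x = t • δu := ht.symm
    subst hx'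
    have happ : f ⟨t • δu, hx⟩ = t • (1:ℝ) := LinearPMap.mkSpanSingleton'_apply δu (1:ℝ) _ t hx
    rw [happ, smul_eq_mul, mul_one]
    show t ≤ Nf hS u (t • δu)
    rcases lt_trichotomy t 0 with h | h | h
    · have e : t • δu = (-t) • (-δu) := by rw [smul_neg, ← neg_smul, neg_neg]
      rw [e, Nf_smul hS u hKL (by linarith), Nf_neg_deltaU hS u hKL]
      linarith
    · subst h
      rw [zero_smul, Nf_zero hS u hKL]
    · rw [Nf_smul hS u hKL h, Nf_deltaU hS u hKL, mul_one]
  obtain ⟨g, hg_eq, hg_le⟩ := exists_extension_of_le_sublinear f (Nf hS u)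
    (fun c hc x => Nf_smul hS u hKL hc x) (Nf_add hS u hKL) hfle
  have hgu : g δu = 1 := by
    have := hg_eq ⟨δu, Submodule.mem_span_singleton_self δu⟩
    rw [this]
    exact LinearPMap.mkSpanSingleton_apply ℝ ℝ hne 1
  refine ⟨fun m => g (Finsupp.single m 1), ?_, ?_, ?_, hgu⟩
  · intro m m' hmm
    have h0 := Nf_formal_le hS u hKL (P := Finsupp.single m 1) (Q := Finsupp.single m' 1)
      (by rw [weight_single, weight_single, one_nsmul, one_nsmul]; exact hmm)
    rw [toR_single, toR_single, Nat.cast_one] at h0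
    have := le_trans (hg_le _) h0
    rw [map_sub] at this
    linarith
  · intro m m'
    have hw : (weight hS u (Finsupp.single (m + m') 1) : S)
        = (weight hS u (Finsupp.single m 1 + Finsupp.single m' 1) : S) := by
      rw [weight_single, weight_add, weight_single, weight_single]
      push_cast
      simp [one_nsmul]
    have h1 := Nf_formal_le hS u hKL (le_of_eq hw)
    have h2 := Nf_formal_le hS u hKL (le_of_eq hw.symm)
    rw [toR_single, toR_add, toR_single, toR_single, Nat.cast_one] at h1 h2
    have b1 := le_trans (hg_le _) h1
    have b2 := le_trans (hg_le _) h2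
    rw [map_sub, map_add] at b1 b2
    linarith
  · intro m
    have h0 := Nf_formal_le hS u hKL (P := 0) (Q := Finsupp.single m 1)
      (by rw [weight_zero, weight_single]; simpa using hS.zero_le _)
    rw [toR_single, Nat.cast_one] at h0
    have := le_trans (hg_le _) h0
    simp only [toR, Finsupp.mapRange_zero, zero_sub, map_neg] at this
    linarith

end Nvals
end CuBasic
namespace CuBasic
variable {S : Type*} [AddCommMonoid S] [PartialOrder S]

theorem exists_functional (hS : IsCuSemigroup S) (hsimple : CuSimple S) (hnz : ∃ a : S, a ≠ 0)
    (h3 : ¬ ∃ a : S, CuWayBelow a a ∧ ∀ b : S, b ≤ a) :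
    ∃ lam : S → ℝ≥0∞, IsCuFunctional lam ∧ ∃ a : S, lam a ≠ 0 ∧ lam a ≠ ∞ := by
  classical
  have h1 := three_to_one hS hsimple h3
  obtain ⟨a0, ha0⟩ := hnz
  obtain ⟨f0, hf0c, hf0l⟩ := hS.O2 a0
  have hex : ∃ N, f0 N ≠ 0 := by
    by_contra hall
    push_neg at hall
    apply ha0
    apply le_antisymm _ (hS.zero_le a0)
    apply hf0l.2
    rintro x ⟨n, rfl⟩
    rw [hall n]
  obtain ⟨Nn, hNn⟩ := hex
  set u := f0 Nn with hu
  set d := f0 (Nn+1) with hd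
  have hud : CuWayBelow u d := hf0c Nn
  have hd2 : CuWayBelow d (f0 (Nn+1+1)) := hf0c (Nn+1)
  obtain ⟨sinf, hsinf_lub, hsinf_great⟩ := exists_greatest_lub hS hsimple hNn
  have hmemU : ∀ {z x : S}, CuWayBelow z x → z ∈ Uc hS u := by
    intro z x hz
    obtain ⟨n, hn⟩ := hz (fun n => n • u) (fun n m h => nsmul_le_nsmul hS u h) sinf
      hsinf_lub (hsinf_great x)
    exact ⟨n, hn⟩
  have hKL : ∀ a b : ℕ, b < a → ∀ z : S, (∃ n : ℕ, z ≤ n • u) → ¬(a • u + z ≤ b • u + z) :=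
    fun a b hab z hz => keyL hS h1 hNn hud hab hz
  obtain ⟨φ, φmono, φadd, φpos, φu⟩ := exists_phi hS u hKL
  have φ0 : φ 0 = 0 := by
    have h00 := φadd 0 0
    rw [add_zero] at h00
    linarith
  set F : S → ℝ≥0∞ := fun y => if h : y ∈ Uc hS u then ENNReal.ofReal (φ ⟨y, h⟩) else 0 with hF
  have hFeq : ∀ (y : S) (h : y ∈ Uc hS u), F y = ENNReal.ofReal (φ ⟨y, h⟩) :=
    fun y h => dif_pos h
  have hFadd : ∀ (y1 y2 : S) (h1 : y1 ∈ Uc hS u) (h2 : y2 ∈ Uc hS u),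
      F (y1 + y2) = F y1 + F y2 := by
    intro y1 y2 h1 h2
    rw [hFeq _ h1, hFeq _ h2, hFeq _ ((Uc hS u).add_mem h1 h2),
      ← ENNReal.ofReal_add (φpos _) (φpos _)]
    congr 1
    have e : (⟨y1 + y2, (Uc hS u).add_mem h1 h2⟩ : ↥(Uc hS u)) = ⟨y1, h1⟩ + ⟨y2, h2⟩ :=
      Subtype.ext rfl
    rw [e, φadd]
  have hFmono : ∀ (y1 y2 : S) (h1 : y1 ∈ Uc hS u) (h2 : y2 ∈ Uc hS u), y1 ≤ y2 →
      F y1 ≤ F y2 := by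
    intro y1 y2 h1 h2 hle
    rw [hFeq _ h1, hFeq _ h2]
    exact ENNReal.ofReal_le_ofReal (φmono _ _ hle)
  set lam : S → ℝ≥0∞ := fun x => ⨆ z : {z : S // CuWayBelow z x}, F z.1 with hlam
  have hne : ∀ x : S, Nonempty {z : S // CuWayBelow z x} := fun x => ⟨⟨0, wb_zero hS x⟩⟩
  have lmono : ∀ x y : S, x ≤ y → lam x ≤ lam y := by
    intro x y hxy
    apply iSup_le
    rintro ⟨z, hz⟩
    exact le_iSup_of_le ⟨z, wb_of_wb_le hz hxy⟩ le_rfl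
  have lzero : lam 0 = 0 := by
    apply le_antisymm _ (zero_le)
    apply iSup_le
    rintro ⟨z, hz⟩
    have hz0 : z = 0 := le_antisymm (wb_le_self hz) (hS.zero_le z)
    subst hz0
    rw [hFeq _ ((Uc hS u).zero_mem)]
    have e : (⟨(0:S), (Uc hS u).zero_mem⟩ : ↥(Uc hS u)) = 0 := Subtype.ext rfl
    rw [e, φ0]
    simp
  have ladd : ∀ x y : S, lam (x + y) = lam x + lam y := by
    intro x y
    apply le_antisymm
    · apply iSup_le
      rintro ⟨z, hz⟩
      obtain ⟨x', y', hx', hy', hzle⟩ := wb_add_decomp hS hz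
      have hzU := hmemU hz
      have hxU := hmemU hx'
      have hyU := hmemU hy'
      calc F z ≤ F (x' + y') :=
            hFmono _ _ hzU ((Uc hS u).add_mem hxU hyU) hzle
      _ = F x' + F y' := hFadd _ _ hxU hyU
      _ ≤ lam x + lam y := add_le_add (le_iSup_of_le ⟨x', hx'⟩ le_rfl)
            (le_iSup_of_le ⟨y', hy'⟩ le_rfl)
    · have e1 : lam x + lam y = ⨆ z1 : {z : S // CuWayBelow z x},
          (F z1.1 + lam y) := by
        haveI := hne x
        rw [hlam, ENNReal.iSup_add]
      rw [e1]
      apply iSup_le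
      rintro ⟨z1, hz1⟩
      have e2 : F z1 + lam y = ⨆ z2 : {z : S // CuWayBelow z y}, (F z1 + F z2.1) := by
        haveI := hne y
        rw [hlam, ENNReal.add_iSup]
      rw [e2]
      apply iSup_le
      rintro ⟨z2, hz2⟩
      have hsum : CuWayBelow (z1 + z2) (x + y) := hS.O3 _ _ _ _ hz1 hz2
      calc F z1 + F z2 = F (z1 + z2) := (hFadd _ _ (hmemU hz1) (hmemU hz2)).symm
      _ ≤ lam (x + y) := le_iSup_of_le ⟨z1 + z2, hsum⟩ le_rfl
  have llub : ∀ f : ℕ → S, Monotone f → ∀ s : S, IsLUB (Set.range f) s →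
      lam s = ⨆ n : ℕ, lam (f n) := by
    intro f hf s hlub
    apply le_antisymm
    · apply iSup_le
      rintro ⟨z, hz⟩
      obtain ⟨n, hzn⟩ := wb_of_lub hS hz hf hlub
      calc F z ≤ lam (f n) := le_iSup_of_le ⟨z, hzn⟩ le_rfl
      _ ≤ ⨆ n, lam (f n) := le_iSup (fun n => lam (f n)) n
    · exact iSup_le fun n => lmono _ _ (hlub.1 ⟨n, rfl⟩)
  refine ⟨lam, ⟨lzero, ladd, lmono, llub⟩, d, ?_, ?_⟩
  · -- lam d ≥ 1
    have hu1 : F u = ENNReal.ofReal (φ ⟨u, hmemU hud⟩) := hFeq _ (hmemU hud)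
    have e : (⟨u, hmemU hud⟩ : ↥(Uc hS u)) = uU hS u := Subtype.ext rfl
    have h1le : (1 : ℝ≥0∞) ≤ lam d := by
      calc (1 : ℝ≥0∞) = ENNReal.ofReal (φ (uU hS u)) := by rw [φu]; simp
      _ = F u := by rw [hu1, e]
      _ ≤ lam d := le_iSup_of_le ⟨u, hud⟩ le_rfl
    intro h0
    rw [h0] at h1le
    simp at h1le
  · -- lam d < ∞
    have hdU : d ∈ Uc hS u := hmemU hd2
    have hbound : lam d ≤ ENNReal.ofReal (φ ⟨d, hdU⟩) := by
      apply iSup_le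
      rintro ⟨z, hz⟩
      rw [hFeq _ (hmemU hz)]
      exact ENNReal.ofReal_le_ofReal (φmono _ _ (wb_le_self hz))
    exact ne_top_of_le_ne_top ENNReal.ofReal_ne_top hbound

end CuBasic

/-- Let `S` be a simple Cu-semigroup with `S ≠ {0}`.  The
following are equivalent:
(1) `S` is stably finite;
(2) every compact element of `S` is finite;
(3) no element of `S` is both compact and a greatest element;
(4) there is a functional on `S` taking a value other than `0` and `∞`. -/
theorem stmt11 {S : Type*} [AddCommMonoid S] [PartialOrder S]
    (hS : IsCuSemigroup S) (hsimple : CuSimple S) (hnz : ∃ a : S, a ≠ 0) :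
    List.TFAE
      [ (∀ a b : S, CuWayBelow a b → ∀ c : S, a + c = a → c = 0),
        (∀ a : S, CuWayBelow a a → ∀ c : S, a + c = a → c = 0),
        (¬ ∃ a : S, CuWayBelow a a ∧ ∀ b : S, b ≤ a),
        (∃ lam : S → ℝ≥0∞, IsCuFunctional lam ∧ ∃ a : S, lam a ≠ 0 ∧ lam a ≠ ∞) ] := by
  tfae_have 1 → 2 := fun h a ha => h a a ha
  tfae_have 2 → 3 := by
    intro h2
    rintro ⟨a, hcomp, hgr⟩
    obtain ⟨x, hx⟩ := hnz
    have hane : a ≠ 0 := by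
      intro h0
      apply hx
      apply le_antisymm _ (hS.zero_le x)
      rw [← h0]
      exact hgr x
    have haa : a + a = a := le_antisymm (hgr (a + a)) (CuBasic.le_add_right hS a a)
    exact hane (h2 a hcomp a haa)
  tfae_have 3 → 1 := CuBasic.three_to_one hS hsimple
  tfae_have 3 → 4 := CuBasic.exists_functional hS hsimple hnz
  tfae_have 4 → 1 := by
    rintro ⟨lam, hlam, a, ha0, hatop⟩
    intro x y hxy c hc
    -- the ideal of elements with vanishing lam
    have hI0 : IsCuIdeal {w : S | lam w = 0} := by
      constructor
      · exact hlam.map_zero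
      · intro w w' hw hw'
        rw [Set.mem_setOf_eq, hlam.map_add, hw, hw', add_zero]
      · intro w w' hww' hw'
        exact le_antisymm (hw' ▸ hlam.mono _ _ hww') (zero_le)
      · intro f hf hmem s hs
        rw [Set.mem_setOf_eq, hlam.map_lub f hf s hs]
        have : ∀ n, lam (f n) = 0 := hmem
        simp [this]
    have hI0ne : {w : S | lam w = 0} ≠ Set.univ := by
      intro h
      have : a ∈ {w : S | lam w = 0} := h ▸ Set.mem_univ a
      exact ha0 this
    have hI0eq : {w : S | lam w = 0} = {0} := (hsimple _ hI0).resolve_right hI0ne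
    -- the ideal of elements all of whose way-below elements have finite lam
    have hIinf : IsCuIdeal {w : S | ∀ z : S, CuWayBelow z w → lam z ≠ ∞} := by
      constructor
      · intro z hz
        have : z = 0 := le_antisymm (CuBasic.wb_le_self hz) (hS.zero_le z)
        rw [this, hlam.map_zero]
        exact ENNReal.zero_ne_top
      · intro w w' hw hw' z hz
        obtain ⟨x', y', hx', hy', hzle⟩ := CuBasic.wb_add_decomp hS hz
        have hle : lam z ≤ lam x' + lam y' := le_trans (hlam.mono _ _ hzle)
          (le_of_eq (hlam.map_add x' y'))
        exact ne_top_of_le_ne_top (ENNReal.add_ne_top.mpr ⟨hw _ hx', hw' _ hy'⟩) hle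
      · intro w w' hww' hw' z hz
        exact hw' z (CuBasic.wb_of_wb_le hz hww')
      · intro f hf hmem s hs z hz
        obtain ⟨n, hzn⟩ := CuBasic.wb_of_lub hS hz hf hs
        exact hmem n z hzn
    have hIinfne : {w : S | ∀ z : S, CuWayBelow z w → lam z ≠ ∞} ≠ {0} := by
      intro h
      have hamem : a ∈ {w : S | ∀ z : S, CuWayBelow z w → lam z ≠ ∞} := by
        intro z hz
        exact ne_top_of_le_ne_top hatop (hlam.mono _ _ (CuBasic.wb_le_self hz))
      rw [h] at hamem
      apply ha0
      rw [Set.mem_singleton_iff.mp hamem, hlam.map_zero]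
    have hIinfeq := (hsimple _ hIinf).resolve_left hIinfne
    have hyinf : y ∈ {w : S | ∀ z : S, CuWayBelow z w → lam z ≠ ∞} :=
      hIinfeq ▸ Set.mem_univ y
    have hxfin : lam x ≠ ∞ := hyinf x hxy
    have hlc : lam c = 0 := by
      have := hlam.map_add x c
      rw [hc] at this
      have h2 : lam x + lam c = lam x + 0 := by rw [add_zero]; exact this.symm
      exact (ENNReal.add_right_inj hxfin).mp h2
    have : c ∈ {w : S | lam w = 0} := hlc
    rw [hI0eq] at this
    exact this
  tfae_finish
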